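/- (Theorem 1, hard attention.) In the linear-orthogonal setting, fix α ∈ [0,1] and let μ : [0,∞) → ℝ be differentiable with μ(0) = 0 and μ'(t) = α β(t) / exp(μ(t)) for all t ≥ 0, where β(t) = exp(μ(t)) / ( exp(μ(t)) + C − 1 ). Then for every t ≥ 0 the fixed-focus hard-attention population loss L^{FF,HA}_α is Fréchet differentiable at W(t) := μ(t) D and (d/dt) W(t) = −∇ L^{FF,HA}_α(W(t)); that is, t ↦ μ(t) D is a gradient-flow trajectory of L^{FF,HA}_α started from the zero matrix. -/

import Mathlib

open scoped RealInnerProductSpace BigOperators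
open MeasureTheory

/-- Softmax of a finite family of reals. -/
noncomputable def softmax {ι : Type*} [Fintype ι] (z : ι → ℝ) (k : ι) : ℝ :=
  Real.exp (z k) / ∑ l, Real.exp (z l)

lemma sum_exp_pos {ι : Type*} [Fintype ι] [Nonempty ι] (z : ι → ℝ) :
    0 < ∑ l, Real.exp (z l) :=
  Finset.sum_pos (fun l _ => Real.exp_pos _) Finset.univ_nonempty

lemma log_softmax {ι : Type*} [Fintype ι] [Nonempty ι] (z : ι → ℝ) (k : ι) :
    Real.log (softmax z k) = z k - Real.log (∑ l, Real.exp (z l)) := by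
  rw [softmax, Real.log_div (Real.exp_ne_zero _) (sum_exp_pos z).ne', Real.log_exp]

variable {C d : ℕ}

/-- `A v` : the CLM `W ↦ (fun i => ⟪v, W i⟫)`. -/
noncomputable def Amap (C d : ℕ) (v : EuclideanSpace ℝ (Fin d)) :
    (PiLp 2 fun _ : Fin C => EuclideanSpace ℝ (Fin d)) →L[ℝ] (Fin C → ℝ) :=
  ContinuousLinearMap.pi fun i => (innerSL ℝ v).comp (PiLp.proj 2 _ i)

lemma Amap_apply (v : EuclideanSpace ℝ (Fin d))
    (W : PiLp 2 fun _ : Fin C => EuclideanSpace ℝ (Fin d)) (i : Fin C) :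
    Amap C d v W i = ⟪W i, v⟫ := by
  simp only [Amap, ContinuousLinearMap.pi_apply, ContinuousLinearMap.comp_apply,
    PiLp.proj_apply, innerSL_apply_apply]
  exact real_inner_comm _ _

/-- derivative of `z ↦ log (softmax z y)` -/
noncomputable def Dphi (C : ℕ) (y : Fin C) (z : Fin C → ℝ) : (Fin C → ℝ) →L[ℝ] ℝ :=
  ContinuousLinearMap.proj y -
    (∑ l, Real.exp (z l))⁻¹ • ∑ l, Real.exp (z l) • ContinuousLinearMap.proj l

lemma Dphi_apply (y : Fin C) (z u : Fin C → ℝ) :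
    Dphi C y z u = u y - (∑ l, Real.exp (z l))⁻¹ * ∑ l, Real.exp (z l) * u l := by
  simp [Dphi, Finset.mul_sum, ContinuousLinearMap.sum_apply]

lemma hasFDerivAt_phi [Nonempty (Fin C)] (y : Fin C) (z₀ : Fin C → ℝ) :
    HasFDerivAt (fun z : Fin C → ℝ => z y - Real.log (∑ l, Real.exp (z l)))
      (Dphi C y z₀) z₀ := by
  have h1 : HasFDerivAt (fun z : Fin C → ℝ => z y)
      (ContinuousLinearMap.proj (R := ℝ) (φ := fun _ : Fin C => ℝ) y) z₀ :=
    hasFDerivAt_apply (𝕜 := ℝ) y z₀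
  have hsum : HasFDerivAt (fun z : Fin C → ℝ => ∑ l, Real.exp (z l))
      (∑ l, Real.exp (z₀ l) • ContinuousLinearMap.proj (R := ℝ) (φ := fun _ : Fin C => ℝ) l) z₀ :=
    HasFDerivAt.fun_sum fun l _ => (hasFDerivAt_apply (𝕜 := ℝ) l z₀).exp
  exact h1.sub (hsum.log (sum_exp_pos z₀).ne')

lemma hasFDerivAt_logsoftmax (hC : 0 < C) (y : Fin C) (v : EuclideanSpace ℝ (Fin d))
    (W₀ : PiLp 2 fun _ : Fin C => EuclideanSpace ℝ (Fin d)) :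
    HasFDerivAt
      (fun W : PiLp 2 fun _ : Fin C => EuclideanSpace ℝ (Fin d) =>
        Real.log (softmax (fun i => ⟪W i, v⟫) y))
      ((Dphi C y (Amap C d v W₀)).comp (Amap C d v)) W₀ := by
  haveI : Nonempty (Fin C) := Fin.pos_iff_nonempty.mp hC
  have h := (hasFDerivAt_phi y (Amap C d v W₀)).comp W₀ (Amap C d v).hasFDerivAt
  exact h.congr_of_eventuallyEq (Filter.Eventually.of_forall fun W => by
    simp [Function.comp, log_softmax, Amap_apply])

lemma norm_Dphi_le [Nonempty (Fin C)] (y : Fin C) (z : Fin C → ℝ) : ‖Dphi C y z‖ ≤ 2 := by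
  refine ContinuousLinearMap.opNorm_le_bound _ (by norm_num) fun u => ?_
  rw [Dphi_apply]
  have hS := sum_exp_pos z
  have h1 : |u y| ≤ ‖u‖ := by simpa using norm_le_pi_norm u y
  have h2 : |∑ l, Real.exp (z l) * u l| ≤ (∑ l, Real.exp (z l)) * ‖u‖ := by
    calc |∑ l, Real.exp (z l) * u l| ≤ ∑ l, |Real.exp (z l) * u l| :=
          Finset.abs_sum_le_sum_abs _ _
      _ ≤ ∑ l, Real.exp (z l) * ‖u‖ := by
          refine Finset.sum_le_sum fun l _ => ?_
          rw [abs_mul, abs_of_pos (Real.exp_pos _)]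
          exact mul_le_mul_of_nonneg_left (by simpa using norm_le_pi_norm u l)
            (Real.exp_pos _).le
      _ = (∑ l, Real.exp (z l)) * ‖u‖ := by rw [Finset.sum_mul]
  have h3 : |(∑ l, Real.exp (z l))⁻¹ * ∑ l, Real.exp (z l) * u l| ≤ ‖u‖ := by
    rw [abs_mul, abs_of_pos (inv_pos.mpr hS)]
    calc (∑ l, Real.exp (z l))⁻¹ * |∑ l, Real.exp (z l) * u l|
        ≤ (∑ l, Real.exp (z l))⁻¹ * ((∑ l, Real.exp (z l)) * ‖u‖) :=
          mul_le_mul_of_nonneg_left h2 (inv_pos.mpr hS).le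
      _ = ‖u‖ := by field_simp
  calc ‖u y - (∑ l, Real.exp (z l))⁻¹ * ∑ l, Real.exp (z l) * u l‖
      ≤ |u y| + |(∑ l, Real.exp (z l))⁻¹ * ∑ l, Real.exp (z l) * u l| := by
        rw [Real.norm_eq_abs]; exact abs_sub _ _
    _ ≤ ‖u‖ + ‖u‖ := add_le_add h1 h3
    _ = 2 * ‖u‖ := by ring

lemma norm_piLp_apply_le (W : PiLp 2 fun _ : Fin C => EuclideanSpace ℝ (Fin d)) (i : Fin C) :
    ‖W i‖ ≤ ‖W‖ := by
  have h2 : ‖W i‖ ^ 2 ≤ ‖W‖ ^ 2 := by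
    have h := Finset.single_le_sum (f := fun j => ‖W j‖ ^ 2)
      (fun j _ => sq_nonneg _) (Finset.mem_univ i)
    rwa [← PiLp.norm_sq_eq_of_L2] at h
  nlinarith [norm_nonneg W, norm_nonneg (W i)]

lemma norm_Amap_le (v : EuclideanSpace ℝ (Fin d)) : ‖Amap C d v‖ ≤ ‖v‖ := by
  refine ContinuousLinearMap.opNorm_le_bound _ (norm_nonneg v) fun W => ?_
  rw [pi_norm_le_iff_of_nonneg (by positivity)]
  intro i
  rw [Amap_apply, Real.norm_eq_abs]
  calc |⟪W i, v⟫| ≤ ‖W i‖ * ‖v‖ := abs_real_inner_le_norm _ _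
    _ ≤ ‖W‖ * ‖v‖ := mul_le_mul_of_nonneg_right (norm_piLp_apply_le W i) (norm_nonneg v)
    _ = ‖v‖ * ‖W‖ := mul_comm _ _

lemma Amap_sub (v w : EuclideanSpace ℝ (Fin d)) :
    Amap C d (v - w) = Amap C d v - Amap C d w := by
  ext W i
  simp [Amap_apply, inner_sub_right]

lemma continuous_comp_Amap (q : (Fin C → ℝ) →L[ℝ] ℝ) :
    Continuous fun v : EuclideanSpace ℝ (Fin d) => q.comp (Amap C d v) := by
  refine (LipschitzWith.of_dist_le_mul (K := ‖q‖₊) fun v w => ?_).continuous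
  rw [dist_eq_norm, dist_eq_norm, ← ContinuousLinearMap.comp_sub, ← Amap_sub]
  calc ‖q.comp (Amap C d (v - w))‖ ≤ ‖q‖ * ‖Amap C d (v - w)‖ :=
        ContinuousLinearMap.opNorm_comp_le _ _
    _ ≤ ‖q‖ * ‖v - w‖ := mul_le_mul_of_nonneg_left (norm_Amap_le _) (norm_nonneg q)

lemma Amap_apply' (v : EuclideanSpace ℝ (Fin d))
    (W : PiLp 2 fun _ : Fin C => EuclideanSpace ℝ (Fin d)) (i : Fin C) :
    Amap C d v W i = ⟪v, W i⟫ := by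
  simp [Amap]

lemma key_algebra (C : ℕ) (a : Fin C → Fin C → ℝ) (α E : ℝ)
    (hC : (C:ℝ) ≠ 0) (hK : E + (C:ℝ) - 1 ≠ 0) :
    (C:ℝ)⁻¹ * ∑ y, -(α * (a y y - (E + (C:ℝ) - 1)⁻¹ * ((∑ l, a y l) + (E - 1) * a y y)))
      = -(α / (E + (C:ℝ) - 1)) * ∑ i, (a i i - (C:ℝ)⁻¹ * ∑ k, a k i) := by
  rw [Finset.mul_sum, Finset.mul_sum]
  have hL : ∀ y, (C:ℝ)⁻¹ * -(α * (a y y - (E + (C:ℝ) - 1)⁻¹ * ((∑ l, a y l) + (E - 1) * a y y)))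
      = -(α / (E + (C:ℝ) - 1)) * a y y + α / (E + (C:ℝ) - 1) * (C:ℝ)⁻¹ * ∑ l, a y l := by
    intro y; field_simp; ring
  have hR : ∀ i, -(α / (E + (C:ℝ) - 1)) * (a i i - (C:ℝ)⁻¹ * ∑ k, a k i)
      = -(α / (E + (C:ℝ) - 1)) * a i i + α / (E + (C:ℝ) - 1) * (C:ℝ)⁻¹ * ∑ k, a k i := by
    intro i; ring
  simp_rw [hL, hR, Finset.sum_add_distrib]
  congr 1
  rw [← Finset.mul_sum, ← Finset.mul_sum, Finset.sum_comm]

set_option maxHeartbeats 1000000 in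
set_option synthInstance.maxHeartbeats 800000 in
/-- Theorem 1, hard attention: in the linear-orthogonal setting, `t ↦ μ(t) D`
is a gradient-flow trajectory (from the zero matrix) of the fixed-focus hard-attention
population loss, where `μ' = α β / exp(μ)` with `β = exp(μ)/(exp(μ)+C−1)`. -/
theorem fixed_focus_hard_attention_gradient_flow
    (d C m : ℕ) (hd : 1 ≤ d) (hC : 2 ≤ C) (hm : 2 ≤ m)
    (s : Fin C → EuclideanSpace ℝ (Fin d)) (hs : Orthonormal ℝ s)
    (ρ : Measure (EuclideanSpace ℝ (Fin d))) [IsProbabilityMeasure ρ]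
    (hρ_int : Integrable (fun x => x) ρ)
    (hρ_mean : ∫ x, x ∂ρ = 0)
    (hρ_orth : ∀ᵐ x ∂ρ, ∀ k, ⟪x, s k⟫ = 0)
    (α : ℝ) (hα : α ∈ Set.Icc (0 : ℝ) 1)
    (D : PiLp 2 fun _ : Fin C => EuclideanSpace ℝ (Fin d))
    (hD : ∀ k, D k = s k - (C : ℝ)⁻¹ • ∑ k', s k')
    (μ : ℝ → ℝ) (hμ0 : μ 0 = 0)
    (β : ℝ → ℝ) (hβ : ∀ t, β t = Real.exp (μ t) / (Real.exp (μ t) + C - 1))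
    (hμ : ∀ t, 0 ≤ t → HasDerivAt μ (α * β t / Real.exp (μ t)) t)
    (L : (PiLp 2 fun _ : Fin C => EuclideanSpace ℝ (Fin d)) → ℝ)
    (hL : ∀ W, L W = (C : ℝ)⁻¹ * ∑ y : Fin C,
      (-(α * Real.log (softmax (fun i => ⟪W i, s y⟫) y))
        - ((1 - α) / ((m : ℝ) - 1)) * ∑ _j : Fin (m - 1),
            ∫ b, Real.log (softmax (fun i => ⟪W i, b⟫) y) ∂ρ)) :
    ∀ t, 0 ≤ t → ∃ g, HasGradientAt L g (μ t • D) ∧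
      HasDerivAt (fun τ => μ τ • D) (-g) t := by
  intro t ht
  have hC0 : 0 < C := by omega
  haveI : Nonempty (Fin C) := Fin.pos_iff_nonempty.mp hC0
  have hCR : (2:ℝ) ≤ (C:ℝ) := by exact_mod_cast hC
  have hEpos : 0 < Real.exp (μ t) := Real.exp_pos _
  have hden : 0 < Real.exp (μ t) + (C:ℝ) - 1 := by linarith
  refine ⟨-(α * β t / Real.exp (μ t)) • D, ?_, ?_⟩
  swap
  · have h := (hμ t ht).smul_const D
    simpa [neg_smul] using h
  -- gradient part
  set W₀ : PiLp 2 fun _ : Fin C => EuclideanSpace ℝ (Fin d) := μ t • D with hW₀def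
  -- derivative of each log-softmax term
  have h1 : ∀ y : Fin C, HasFDerivAt
      (fun W : PiLp 2 fun _ : Fin C => EuclideanSpace ℝ (Fin d) =>
        Real.log (softmax (fun i => ⟪W i, s y⟫) y))
      ((Dphi C y (Amap C d (s y) W₀)).comp (Amap C d (s y))) W₀ :=
    fun y => hasFDerivAt_logsoftmax hC0 y (s y) W₀
  -- derivative of each integral term is zero
  have h2 : ∀ y : Fin C, HasFDerivAt
      (fun W : PiLp 2 fun _ : Fin C => EuclideanSpace ℝ (Fin d) =>
        ∫ b, Real.log (softmax (fun i => ⟪W i, b⟫) y) ∂ρ)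
      (0 : (PiLp 2 fun _ : Fin C => EuclideanSpace ℝ (Fin d)) →L[ℝ] ℝ) W₀ := by
    intro y
    have key0 : ∀ᵐ b ∂ρ, Amap C d b W₀ = 0 := by
      filter_upwards [hρ_orth] with b hb
      have hb' : ∀ k, ⟪s k, b⟫ = 0 := fun k => by rw [real_inner_comm]; exact hb k
      funext i
      have hWi : W₀ i = μ t • D i := rfl
      rw [Amap_apply, hWi, real_inner_smul_left, hD i, inner_sub_left,
        real_inner_smul_left, sum_inner]
      simp [hb']
    have hmeas : ∀ W : PiLp 2 fun _ : Fin C => EuclideanSpace ℝ (Fin d),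
        AEStronglyMeasurable (fun b => Real.log (softmax (fun i => ⟪W i, b⟫) y)) ρ := by
      intro W
      have hcont : Continuous fun b : EuclideanSpace ℝ (Fin d) =>
          Real.log (softmax (fun i => ⟪W i, b⟫) y) := by
        simp only [log_softmax]
        refine Continuous.sub ?_ ?_
        · exact continuous_const.inner continuous_id
        · refine Continuous.log ?_ fun b => (sum_exp_pos _).ne'
          exact continuous_finset_sum _ fun l _ =>
            Real.continuous_exp.comp (continuous_const.inner continuous_id)
      exact hcont.aestronglyMeasurable
    have hFint : Integrable (fun b => Real.log (softmax (fun i => ⟪W₀ i, b⟫) y)) ρ := by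
      refine (integrable_const (-Real.log C)).congr ?_
      filter_upwards [key0] with b hb
      have hfun : (fun i => (⟪W₀ i, b⟫ : ℝ)) = fun _ => 0 := by
        funext i
        rw [← Amap_apply (C := C) (d := d) b W₀ i, hb]
        rfl
      rw [hfun, log_softmax]
      simp
    have hF'meas : AEStronglyMeasurable
        (fun b => (Dphi C y (Amap C d b W₀)).comp (Amap C d b)) ρ := by
      refine (Continuous.aestronglyMeasurable (continuous_comp_Amap (Dphi C y 0))).congr ?_
      filter_upwards [key0] with b hb
      rw [hb]
    have hbound : ∀ᵐ b ∂ρ, ∀ W ∈ Metric.ball W₀ 1,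
        ‖(Dphi C y (Amap C d b W)).comp (Amap C d b)‖ ≤ 2 * ‖b‖ := by
      refine Filter.Eventually.of_forall fun b W _ => ?_
      calc ‖(Dphi C y (Amap C d b W)).comp (Amap C d b)‖
          ≤ ‖Dphi C y (Amap C d b W)‖ * ‖Amap C d b‖ :=
            ContinuousLinearMap.opNorm_comp_le _ _
        _ ≤ 2 * ‖b‖ :=
            mul_le_mul (norm_Dphi_le _ _) (norm_Amap_le _) (norm_nonneg _) (by norm_num)
    have hdiff : ∀ᵐ b ∂ρ, ∀ W ∈ Metric.ball W₀ 1,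
        HasFDerivAt (fun W : PiLp 2 fun _ : Fin C => EuclideanSpace ℝ (Fin d) =>
            Real.log (softmax (fun i => ⟪W i, b⟫) y))
          ((Dphi C y (Amap C d b W)).comp (Amap C d b)) W :=
      Filter.Eventually.of_forall fun b W _ => hasFDerivAt_logsoftmax hC0 y b W
    have hInt := hasFDerivAt_integral_of_dominated_of_fderiv_le (Metric.ball_mem_nhds W₀ one_pos)
      (Filter.Eventually.of_forall fun W => hmeas W) hFint hF'meas hbound
      ((hρ_int.norm.const_mul 2)) hdiff
    have hTle : ∀ b : EuclideanSpace ℝ (Fin d),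
        ‖(Dphi C y 0).comp (Amap C d b)‖ ≤ 2 * ‖b‖ := fun b => by
      calc ‖(Dphi C y 0).comp (Amap C d b)‖
          ≤ ‖Dphi C y 0‖ * ‖Amap C d b‖ := ContinuousLinearMap.opNorm_comp_le _ _
        _ ≤ 2 * ‖b‖ :=
            mul_le_mul (norm_Dphi_le _ _) (norm_Amap_le _) (norm_nonneg _) (by norm_num)
    have hTint : Integrable (fun b => (Dphi C y 0).comp (Amap C d b)) ρ :=
      Integrable.mono' (hρ_int.norm.const_mul 2)
        (continuous_comp_Amap _).aestronglyMeasurable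
        (Filter.Eventually.of_forall hTle)
    have hzero : (∫ b, (Dphi C y (Amap C d b W₀)).comp (Amap C d b) ∂ρ)
        = (0 : (PiLp 2 fun _ : Fin C => EuclideanSpace ℝ (Fin d)) →L[ℝ] ℝ) := by
      have hcongr : (∫ b, (Dphi C y (Amap C d b W₀)).comp (Amap C d b) ∂ρ)
          = ∫ b, (Dphi C y 0).comp (Amap C d b) ∂ρ := by
        refine integral_congr_ae ?_
        filter_upwards [key0] with b hb
        rw [hb]
      rw [hcongr]
      refine ContinuousLinearMap.ext fun U => ?_
      rw [ContinuousLinearMap.integral_apply hTint U]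
      have hval : ∀ b : EuclideanSpace ℝ (Fin d),
          ((Dphi C y 0).comp (Amap C d b)) U = ⟪U y - (C:ℝ)⁻¹ • ∑ l, U l, b⟫ := by
        intro b
        rw [ContinuousLinearMap.comp_apply, Dphi_apply]
        simp only [Amap_apply, Pi.zero_apply, Real.exp_zero, one_mul, Finset.sum_const,
          Finset.card_univ, Fintype.card_fin, nsmul_eq_mul, mul_one,
          inner_sub_left, real_inner_smul_left, sum_inner]
      simp_rw [hval]
      rw [integral_inner hρ_int, hρ_mean, inner_zero_right,
        ContinuousLinearMap.zero_apply]
    rw [hzero] at hInt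
    exact hInt
  have h3 : ∀ y : Fin C, HasFDerivAt
      (fun W : PiLp 2 fun _ : Fin C => EuclideanSpace ℝ (Fin d) =>
        -(α * Real.log (softmax (fun i => ⟪W i, s y⟫) y)) -
          ((1 - α) / ((m:ℝ) - 1)) * ∑ _j : Fin (m - 1),
            ∫ b, Real.log (softmax (fun i => ⟪W i, b⟫) y) ∂ρ)
      (-(α • ((Dphi C y (Amap C d (s y) W₀)).comp (Amap C d (s y)))) -
        ((1 - α) / ((m:ℝ) - 1)) • ∑ _j : Fin (m - 1),
          (0 : (PiLp 2 fun _ : Fin C => EuclideanSpace ℝ (Fin d)) →L[ℝ] ℝ)) W₀ := fun y =>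
    (((h1 y).const_mul α).neg.sub
      ((HasFDerivAt.fun_sum fun (_ : Fin (m-1)) _ => h2 y).const_mul ((1 - α) / ((m:ℝ) - 1))))
  have hsum := HasFDerivAt.fun_sum (x := W₀) fun (y : Fin C) (_ : y ∈ Finset.univ) => h3 y
  have hfull := hsum.const_mul ((C:ℝ)⁻¹)
  rw [funext hL]
  rw [hasGradientAt_iff_hasFDerivAt]
  refine hfull.congr_fderiv ?_
  refine ContinuousLinearMap.ext fun U => ?_
  have hz : ∀ y l : Fin C, Amap C d (s y) W₀ l
      = μ t * ((if y = l then 1 else 0) - (C:ℝ)⁻¹) := by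
    intro y l
    have hsi := orthonormal_iff_ite.mp hs
    have hWl : W₀ l = μ t • D l := rfl
    rw [Amap_apply', hWl, real_inner_smul_right, hD l, inner_sub_right,
      real_inner_smul_right, inner_sum]
    simp only [hsi, Finset.sum_ite_eq, Finset.mem_univ, if_true]
    ring
  have hexp : ∀ y l : Fin C, Real.exp (Amap C d (s y) W₀ l)
      = Real.exp (-(μ t * (C:ℝ)⁻¹)) * (if y = l then Real.exp (μ t) else 1) := by
    intro y l
    rw [hz y l]
    split_ifs with h
    · rw [← Real.exp_add]; congr 1; ring
    · rw [mul_one]; congr 1; ring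
  have hsum1 : ∀ y : Fin C, (∑ l, Real.exp (Amap C d (s y) W₀ l))
      = Real.exp (-(μ t * (C:ℝ)⁻¹)) * (Real.exp (μ t) + (C:ℝ) - 1) := by
    intro y
    simp_rw [hexp y]
    rw [← Finset.mul_sum]
    congr 1
    have h : ∀ l : Fin C, (if y = l then Real.exp (μ t) else 1)
        = 1 + (if y = l then Real.exp (μ t) - 1 else 0) := fun l => by split_ifs <;> ring
    simp_rw [h, Finset.sum_add_distrib, Finset.sum_const, Finset.sum_ite_eq,
      Finset.mem_univ, if_true, Finset.card_univ, Fintype.card_fin, nsmul_eq_mul, mul_one]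
    ring
  have key : ∀ y : Fin C, ((Dphi C y (Amap C d (s y) W₀)).comp (Amap C d (s y))) U
      = ⟪s y, U y⟫ - (Real.exp (μ t) + (C:ℝ) - 1)⁻¹ *
          ((∑ l, ⟪s y, U l⟫) + (Real.exp (μ t) - 1) * ⟪s y, U y⟫) := by
    intro y
    rw [ContinuousLinearMap.comp_apply, Dphi_apply, hsum1 y]
    simp_rw [hexp y, Amap_apply', mul_assoc]
    rw [← Finset.mul_sum, mul_inv, mul_mul_mul_comm,
      inv_mul_cancel₀ (Real.exp_ne_zero _), one_mul]
    congr 2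
    have h : ∀ l : Fin C, (if y = l then Real.exp (μ t) else 1) * ⟪s y, U l⟫
        = ⟪s y, U l⟫ + (if y = l then (Real.exp (μ t) - 1) * ⟪s y, U l⟫ else 0) :=
      fun l => by split_ifs <;> ring
    simp_rw [h, Finset.sum_add_distrib, Finset.sum_ite_eq, Finset.mem_univ, if_true]
  simp only [ContinuousLinearMap.smul_apply, ContinuousLinearMap.coe_sum',
    Finset.sum_apply, ContinuousLinearMap.sub_apply, ContinuousLinearMap.neg_apply,
    ContinuousLinearMap.zero_apply, Finset.sum_const_zero, smul_zero, sub_zero, smul_eq_mul]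
  simp_rw [key]
  have hνeq : α * β t / Real.exp (μ t) = α / (Real.exp (μ t) + (C:ℝ) - 1) := by
    rw [hβ]
    field_simp
  rw [InnerProductSpace.toDual_apply_apply, real_inner_smul_left, hνeq, PiLp.inner_apply]
  simp_rw [hD, inner_sub_left, real_inner_smul_left, sum_inner]
  exact key_algebra C (fun y l => ⟪s y, U l⟫) α (Real.exp (μ t))
    (by positivity) (by linarith)
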